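/- arXiv:1710.05651 — 2 statements merged into one kernel-verified Lean document; each statement's English description precedes it below -/
import Mathlib

section
/- For n ≥ 1, the number of admissible binary sequences in {0,1}^{n+1} equals (2^{n+1} - 1)/3 if n is odd and (2^{n+1} - 2)/3 if n is even. -/
open Finset
open Fin.NatCast

/-- A binary sequence `(d_0,...,d_n)` (encoded as `v : Fin (n+1) → Fin 2`) is
admissible if it is non-alternating (when `n ≥ 1`, two consecutive entries agree)
and `n + #{i : d_i = 0} ≡ 1 (mod 3)`. -/
def AdmissibleSeq {n : ℕ} (v : Fin (n + 1) → Fin 2) : Prop :=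
  (1 ≤ n → ∃ j : Fin n, v j.castSucc = v j.succ) ∧
  (n + (Finset.univ.filter (fun i => v i = 0)).card) % 3 = 1


def Zc {m : ℕ} (v : Fin m → Fin 2) : ℕ :=
  (Finset.univ.filter (fun i => v i = 0)).card

def cnt (c m : ℕ) : ℕ :=
  ∑ v : Fin m → Fin 2, if Zc v % 3 = c then 1 else 0

def etab (c m : ℕ) : ℤ :=
  if c = 0 then
    (if m % 6 = 0 then 2 else if m % 6 = 1 then 1 else if m % 6 = 2 then -1
     else if m % 6 = 3 then -2 else if m % 6 = 4 then -1 else 1)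
  else if c = 1 then
    (if m % 6 = 0 then -1 else if m % 6 = 1 then 1 else if m % 6 = 2 then 2
     else if m % 6 = 3 then 1 else if m % 6 = 4 then -1 else -2)
  else
    (if m % 6 = 0 then -1 else if m % 6 = 1 then -2 else if m % 6 = 2 then -1
     else if m % 6 = 3 then 1 else if m % 6 = 4 then 2 else 1)

lemma etab_rec (c m : ℕ) (hc : c < 3) :
    etab c (m+1) = etab ((c+2)%3) m + etab c m := by
  have h1 : (m+1) % 6 = (m % 6 + 1) % 6 := by omega
  have h6 : m % 6 = 0 ∨ m % 6 = 1 ∨ m % 6 = 2 ∨ m % 6 = 3 ∨ m % 6 = 4 ∨ m % 6 = 5 := by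
    omega
  interval_cases c <;> rcases h6 with h|h|h|h|h|h <;> norm_num [etab, h1, h]

lemma Zc_cons {m : ℕ} (a : Fin 2) (w : Fin m → Fin 2) :
    Zc (Fin.cons a w) = (if a = 0 then 1 else 0) + Zc w := by
  simp only [Zc, Finset.card_filter]
  rw [Fin.sum_univ_succ]
  simp [Fin.cons_zero, Fin.cons_succ]

lemma cnt_succ (c m : ℕ) (hc : c < 3) :
    cnt c (m+1) = cnt ((c+2)%3) m + cnt c m := by
  have key : cnt c (m+1)
      = ∑ p : Fin 2 × (Fin m → Fin 2),
          (if Zc (Fin.cons p.1 p.2) % 3 = c then 1 else 0) := by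
    rw [cnt]
    exact (Fintype.sum_equiv (Fin.consEquiv (fun _ => Fin 2)) _ _ (fun p => rfl)).symm
  rw [key, Fintype.sum_prod_type, Fin.sum_univ_two]
  have h0 : ∀ w : Fin m → Fin 2,
      (if Zc (Fin.cons (0:Fin 2) w) % 3 = c then (1:ℕ) else 0)
        = (if Zc w % 3 = (c+2)%3 then 1 else 0) := by
    intro w
    have hz : Zc (Fin.cons (0:Fin 2) w) = 1 + Zc w := by rw [Zc_cons]; norm_num
    rw [hz]
    exact if_congr (by omega) rfl rfl
  have h1 : ∀ w : Fin m → Fin 2,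
      (if Zc (Fin.cons (1:Fin 2) w) % 3 = c then (1:ℕ) else 0)
        = (if Zc w % 3 = c then 1 else 0) := by
    intro w
    have hz : Zc (Fin.cons (1:Fin 2) w) = Zc w := by
      rw [Zc_cons]; norm_num
    rw [hz]
  simp only [h0, h1]
  rfl

lemma cnt_zero (c : ℕ) : cnt c 0 = if c = 0 then 1 else 0 := by
  rw [cnt, Fintype.sum_unique]
  simp only [Zc, Finset.univ_eq_empty, Finset.filter_empty, Finset.card_empty, Nat.zero_mod]
  exact if_congr (by omega) rfl rfl

lemma cnt_closed : ∀ m c, c < 3 → 3 * (cnt c m : ℤ) = ((2^m : ℕ) : ℤ) + etab c m := by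
  intro m
  induction m with
  | zero =>
    intro c hc
    interval_cases c <;> simp [cnt_zero, etab]
  | succ m ih =>
    intro c hc
    rw [cnt_succ c m hc, etab_rec c m hc]
    have i1 := ih ((c+2)%3) (by omega)
    have i2 := ih c hc
    have hp : (2:ℕ)^(m+1) = 2^m + 2^m := by ring
    omega
def valt {n : ℕ} (a : Fin 2) : Fin (n+1) → Fin 2 := fun i => a + ((i : ℕ) : Fin 2)

lemma fin2_ne (a b : Fin 2) (h : a ≠ b) : b = a + 1 := by
  revert h; revert a b; decide

lemma alt_iff {n : ℕ} (v : Fin (n+1) → Fin 2) :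
    (¬ ∃ j : Fin n, v j.castSucc = v j.succ) ↔ (v = valt 0 ∨ v = valt 1) := by
  constructor
  · intro h
    push_neg at h
    have key : ∀ i : Fin (n+1), v i = v 0 + ((i : ℕ) : Fin 2) := by
      intro i
      induction i using Fin.induction with
      | zero => simp
      | succ j ih =>
        have h1 : v j.succ = v j.castSucc + 1 := fin2_ne _ _ (h j)
        rw [h1, ih]
        have h2 : (((j.succ : Fin (n+1)) : ℕ) : Fin 2)
            = (((j.castSucc : Fin (n+1)) : ℕ) : Fin 2) + 1 := by
          rw [Fin.val_succ, Fin.coe_castSucc]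
          push_cast
          ring
        rw [h2]
        rw [add_assoc]
    have h0 : v 0 = 0 ∨ v 0 = 1 := by
      rcases (by decide : ∀ a : Fin 2, a = 0 ∨ a = 1) (v 0) with h|h
      · exact Or.inl h
      · exact Or.inr h
    rcases h0 with h0 | h0
    · left; funext i; rw [key i, h0]; rfl
    · right; funext i; rw [key i, h0]; rfl
  · rintro (rfl | rfl) <;>
    · rintro ⟨j, hj⟩
      simp only [valt, Fin.val_succ, Fin.coe_castSucc] at hj
      push_cast at hj
      have := add_left_cancel hj
      revert this
      generalize ((j : ℕ) : Fin 2) = x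
      revert x
      decide

lemma evenCount : ∀ m, (∑ k ∈ Finset.range m, if k % 2 = 0 then 1 else 0) = (m+1)/2 := by
  intro m
  induction m with
  | zero => simp
  | succ m ih =>
    rw [Finset.sum_range_succ, ih]
    split_ifs with h <;> omega

lemma oddCount : ∀ m, (∑ k ∈ Finset.range m, if k % 2 = 1 then 1 else 0) = m/2 := by
  intro m
  induction m with
  | zero => simp
  | succ m ih =>
    rw [Finset.sum_range_succ, ih]
    split_ifs with h <;> omega

lemma Zc_valt0 {n : ℕ} : Zc (valt (n := n) 0) = n/2 + 1 := by
  rw [Zc, Finset.card_filter]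
  simp only [valt]
  erw [Fin.sum_univ_eq_sum_range (fun k => if ((0:Fin 2) + ((k:ℕ) : Fin 2) = 0) then 1 else 0) (n+1)]
  have hc : ∀ k : ℕ, ((0:Fin 2) + (k : Fin 2) = 0) ↔ k % 2 = 0 := by
    intro k
    rw [zero_add, Fin.ext_iff, Fin.val_natCast]
    simp
  simp only [hc]
  rw [evenCount (n+1)]
  omega

lemma Zc_valt1 {n : ℕ} : Zc (valt (n := n) 1) = (n+1)/2 := by
  rw [Zc, Finset.card_filter]
  simp only [valt]
  erw [Fin.sum_univ_eq_sum_range (fun k => if ((1:Fin 2) + ((k:ℕ) : Fin 2) = 0) then 1 else 0) (n+1)]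
  have hc : ∀ k : ℕ, ((1:Fin 2) + (k : Fin 2) = 0) ↔ k % 2 = 1 := by
    intro k
    rw [Fin.ext_iff, Fin.add_def, Fin.val_natCast]
    simp
    omega
  simp only [hc]
  rw [oddCount (n+1)]
set_option maxHeartbeats 1000000 in
theorem stmt13 (n : ℕ) (hn : 1 ≤ n) :
    Nat.card {v : Fin (n + 1) → Fin 2 // AdmissibleSeq v} =
      if Odd n then (2 ^ (n + 1) - 1) / 3 else (2 ^ (n + 1) - 2) / 3 := by
  classical
  obtain ⟨c, hcdef⟩ : ∃ c, c = (2 * n + 1) % 3 := ⟨_, rfl⟩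
  have hclt : c < 3 := by omega
  have hN : Nat.card {v : Fin (n + 1) → Fin 2 // AdmissibleSeq v}
      = ∑ v : Fin (n+1) → Fin 2, if AdmissibleSeq v then 1 else 0 := by
    rw [Nat.card_eq_fintype_card, Fintype.card_subtype, Finset.card_filter]
  have split1 : ∀ v : Fin (n+1) → Fin 2,
      (if Zc v % 3 = c then (1:ℕ) else 0)
        = (if AdmissibleSeq v then 1 else 0)
          + (if (¬ ∃ j : Fin n, v j.castSucc = v j.succ) ∧ (n + Zc v) % 3 = 1
              then 1 else 0) := by
    intro v
    have hm : (Zc v % 3 = c) ↔ ((n + Zc v) % 3 = 1) := by clear hN; omega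
    have hA : AdmissibleSeq v ↔
        ((∃ j : Fin n, v j.castSucc = v j.succ) ∧ (n + Zc v) % 3 = 1) := by
      unfold AdmissibleSeq Zc
      constructor
      · rintro ⟨h1, h2⟩; exact ⟨h1 hn, h2⟩
      · rintro ⟨h1, h2⟩; exact ⟨fun _ => h1, h2⟩
    by_cases h1 : (∃ j : Fin n, v j.castSucc = v j.succ) <;>
      by_cases h2 : (n + Zc v) % 3 = 1 <;>
      simp [hA, h1, h2, hm]
  have hsum : cnt c (n+1)
      = (∑ v : Fin (n+1) → Fin 2, if AdmissibleSeq v then 1 else 0)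
        + ∑ v : Fin (n+1) → Fin 2,
            (if (¬ ∃ j : Fin n, v j.castSucc = v j.succ) ∧ (n + Zc v) % 3 = 1
              then 1 else 0) := by
    rw [cnt, ← Finset.sum_add_distrib]
    exact Finset.sum_congr rfl fun v _ => split1 v
  have hne : valt (n := n) 0 ≠ valt 1 := by
    intro h
    have h0 := congrFun h 0
    simp only [valt] at h0
    norm_num at h0
  have A_eq : (∑ v : Fin (n+1) → Fin 2,
        (if (¬ ∃ j : Fin n, v j.castSucc = v j.succ) ∧ (n + Zc v) % 3 = 1
          then (1:ℕ) else 0))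
      = (if (n + (n/2 + 1)) % 3 = 1 then 1 else 0)
        + (if (n + (n+1)/2) % 3 = 1 then 1 else 0) := by
    have hpt : ∀ v : Fin (n+1) → Fin 2,
        (if (¬ ∃ j : Fin n, v j.castSucc = v j.succ) ∧ (n + Zc v) % 3 = 1
          then (1:ℕ) else 0)
        = (if v ∈ ({valt 0, valt 1} : Finset (Fin (n+1) → Fin 2))
            then (if (n + Zc v) % 3 = 1 then 1 else 0) else 0) := by
      intro v
      have hmem : (v ∈ ({valt 0, valt 1} : Finset (Fin (n+1) → Fin 2)))
          ↔ (¬ ∃ j : Fin n, v j.castSucc = v j.succ) := by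
        rw [Finset.mem_insert, Finset.mem_singleton, alt_iff]
      by_cases h1 : (¬ ∃ j : Fin n, v j.castSucc = v j.succ) <;>
        by_cases h2 : (n + Zc v) % 3 = 1 <;>
        simp [hmem, h1, h2]
    rw [Finset.sum_congr rfl fun v _ => hpt v]
    rw [Finset.sum_ite_mem, Finset.univ_inter, Finset.sum_pair hne]
    rw [Zc_valt0, Zc_valt1]
  have hclosed := cnt_closed (n+1) c hclt
  rw [hN]
  rw [hsum, A_eq] at hclosed
  clear hN hsum A_eq split1 hne
  generalize hS : (∑ v : Fin (n+1) → Fin 2, if AdmissibleSeq v then (1:ℕ) else 0) = S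
    at hclosed ⊢
  clear hS
  simp only [Nat.odd_iff]
  have hp1 : 1 ≤ (2:ℕ)^(n+1) := Nat.one_le_two_pow
  simp only [etab] at hclosed
  split_ifs at hclosed <;> split_ifs <;> omega
end

section
/- For n ≥ 1, let B_n be the number of admissible binary sequences in {0,1}^{n+1}. Then B_1 = 1 and B_n = 2^n - 1 - B_{n-1} for all n ≥ 2. -/
open Finset
open Fin.CommRing

instance admDec {n : ℕ} : DecidablePred (@AdmissibleSeq n) := fun v => by
  unfold AdmissibleSeq; infer_instance

namespace Stmt18Aux

def zc {n : ℕ} (v : Fin (n + 1) → Fin 2) : ℕ :=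
  (Finset.univ.filter (fun i => v i = 0)).card

def Alt {n : ℕ} (v : Fin (n + 1) → Fin 2) : Prop :=
  ∀ j : Fin n, v j.castSucc ≠ v j.succ

instance {n : ℕ} : DecidablePred (@Alt n) := fun v => by unfold Alt; infer_instance

def fR (n r : ℕ) : ℕ :=
  ((Finset.univ : Finset (Fin (n + 1) → Fin 2)).filter (fun v => (n + zc v) % 3 = r)).card

def aC (n : ℕ) : ℕ :=
  ((Finset.univ : Finset (Fin (n + 1) → Fin 2)).filter
    (fun v => (n + zc v) % 3 = 1 ∧ Alt v)).card

lemma zc_cons {n : ℕ} (a : Fin 2) (w : Fin (n + 1) → Fin 2) :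
    zc (Fin.cons a w) = (if a = 0 then 1 else 0) + zc w := by
  unfold zc
  rw [Finset.card_filter, Finset.card_filter, Fin.sum_univ_succ]
  simp

lemma fR_succ (n : ℕ) : fR (n + 1) 1 = fR n 0 + fR n 2 := by
  have key :
      (∑ v : Fin (n + 2) → Fin 2, if (n + 1 + zc v) % 3 = 1 then 1 else 0) =
      ∑ x : Fin 2 × (Fin (n + 1) → Fin 2),
        if (n + 1 + zc (Fin.cons x.1 x.2)) % 3 = 1 then 1 else 0 :=
    (Fintype.sum_equiv (Fin.consEquiv (fun _ => Fin 2)) _ _ (fun x => by rfl)).symm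
  rw [Fintype.sum_prod_type, Fin.sum_univ_two] at key
  simp only [fR, Finset.card_filter]
  rw [key]
  have e0 : (∑ w : Fin (n + 1) → Fin 2,
      if (n + 1 + zc (Fin.cons ((0 : Fin 2), w).1 ((0 : Fin 2), w).2)) % 3 = 1 then 1 else 0) =
      ∑ w : Fin (n + 1) → Fin 2, if (n + zc w) % 3 = 2 then 1 else 0 := by
    apply Finset.sum_congr rfl
    intro w _
    have hz : zc (Fin.cons (0 : Fin 2) w) = 1 + zc w := by rw [zc_cons]; norm_num
    rw [hz]
    exact if_congr (by omega) rfl rfl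
  have e1 : (∑ w : Fin (n + 1) → Fin 2,
      if (n + 1 + zc (Fin.cons ((1 : Fin 2), w).1 ((1 : Fin 2), w).2)) % 3 = 1 then 1 else 0) =
      ∑ w : Fin (n + 1) → Fin 2, if (n + zc w) % 3 = 0 then 1 else 0 := by
    apply Finset.sum_congr rfl
    intro w _
    have hz : zc (Fin.cons (1 : Fin 2) w) = zc w := by
      rw [zc_cons, if_neg (by decide : ¬ (1 : Fin 2) = 0)]
      exact Nat.zero_add _
    rw [hz]
    exact if_congr (by omega) rfl rfl
  rw [e0, e1]
  ring

lemma fR_total (n : ℕ) : fR n 0 + fR n 1 + fR n 2 = 2 ^ (n + 1) := by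
  have hcard : (2 : ℕ) ^ (n + 1) = ∑ _v : Fin (n + 1) → Fin 2, 1 := by
    simp
  simp only [fR, Finset.card_filter]
  rw [hcard, ← Finset.sum_add_distrib, ← Finset.sum_add_distrib]
  apply Finset.sum_congr rfl
  intro v _
  have : (n + zc v) % 3 < 3 := Nat.mod_lt _ (by norm_num)
  split_ifs <;> omega

def alt (b : Fin 2) (n : ℕ) : Fin (n + 1) → Fin 2 := fun i => b + ((i : ℕ) : Fin 2)

lemma alt_isAlt (b : Fin 2) (n : ℕ) : Alt (alt b n) := by
  intro j
  simp only [alt, Fin.coe_castSucc, Fin.val_succ]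
  push_cast
  have : ∀ x y : Fin 2, x + y ≠ x + (y + 1) := by decide
  exact this _ _

lemma alt_eq {n : ℕ} {v : Fin (n + 1) → Fin 2} (h : Alt v) : v = alt (v 0) n := by
  funext i
  induction i using Fin.induction with
  | zero => simp [alt]
  | succ i ih =>
    have h2 : ∀ x y : Fin 2, x ≠ y → y = x + 1 := by decide
    have := h2 _ _ (h i)
    rw [this, ih]
    simp only [alt, Fin.coe_castSucc, Fin.val_succ]
    push_cast
    ring

lemma alt_ne (n : ℕ) : alt 0 n ≠ alt 1 n := by
  intro h
  have := congrFun h 0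
  simp [alt] at this

lemma count_even (m : ℕ) :
    (Finset.filter (fun i : Fin m => (i : ℕ) % 2 = 0) Finset.univ).card = (m + 1) / 2 := by
  rw [Finset.card_filter]
  rw [Fin.sum_univ_eq_sum_range (fun i => if i % 2 = 0 then 1 else 0)]
  induction m with
  | zero => simp
  | succ m ih =>
    rw [Finset.sum_range_succ, ih]
    split_ifs <;> omega

lemma count_odd (m : ℕ) :
    (Finset.filter (fun i : Fin m => (i : ℕ) % 2 = 1) Finset.univ).card = m / 2 := by
  rw [Finset.card_filter]
  rw [Fin.sum_univ_eq_sum_range (fun i => if i % 2 = 1 then 1 else 0)]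
  induction m with
  | zero => simp
  | succ m ih =>
    rw [Finset.sum_range_succ, ih]
    split_ifs <;> omega

lemma zc_alt0 (n : ℕ) : zc (alt 0 n) = (n + 2) / 2 := by
  have h : ∀ i : Fin (n + 1), (alt 0 n i = 0) ↔ ((i : ℕ) % 2 = 0) := by
    intro i
    simp only [alt, zero_add, Fin.ext_iff, Fin.val_natCast, Fin.val_zero]
  unfold zc
  rw [Finset.filter_congr (fun i _ => by rw [h i]), count_even]

lemma zc_alt1 (n : ℕ) : zc (alt 1 n) = (n + 1) / 2 := by
  have h10 : ∀ x : Fin 2, ((1 : Fin 2) + x = 0) ↔ x = 1 := by decide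
  have h : ∀ i : Fin (n + 1), (alt 1 n i = 0) ↔ ((i : ℕ) % 2 = 1) := by
    intro i
    simp only [alt, h10, Fin.ext_iff, Fin.val_natCast, Fin.val_one]
  unfold zc
  rw [Finset.filter_congr (fun i _ => by rw [h i]), count_odd]

lemma aC_eq (n : ℕ) : aC n = if n % 2 = 0 then 1 else 0 := by
  have hne := alt_ne n
  have hset : (Finset.univ : Finset (Fin (n + 1) → Fin 2)).filter
      (fun v => (n + zc v) % 3 = 1 ∧ Alt v) =
      ({alt 0 n, alt 1 n} : Finset _).filter (fun v => (n + zc v) % 3 = 1) := by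
    ext v
    simp only [Finset.mem_filter, Finset.mem_univ, true_and, Finset.mem_insert,
      Finset.mem_singleton]
    constructor
    · rintro ⟨hr, ha⟩
      refine ⟨?_, hr⟩
      have hv := alt_eq ha
      rcases (by decide : ∀ x : Fin 2, x = 0 ∨ x = 1) (v 0) with h | h
      · left; rw [hv, h]
      · right; rw [hv, h]
    · rintro ⟨hv, hr⟩
      refine ⟨hr, ?_⟩
      rcases hv with rfl | rfl
      · exact alt_isAlt 0 n
      · exact alt_isAlt 1 n
  rw [aC, hset, Finset.filter_insert, Finset.filter_singleton, zc_alt0, zc_alt1]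
  rcases Nat.mod_two_eq_zero_or_one n with h2 | h2
  · rw [if_pos h2, if_pos (by omega : (n + (n + 2) / 2) % 3 = 1),
      if_neg (by omega : ¬ (n + (n + 1) / 2) % 3 = 1)]
    simp
  · rw [if_neg (by omega : ¬ n % 2 = 0), if_neg (by omega : ¬ (n + (n + 2) / 2) % 3 = 1),
      if_neg (by omega : ¬ (n + (n + 1) / 2) % 3 = 1)]
    simp

lemma cardB (n : ℕ) (hn : 1 ≤ n) :
    Nat.card {v : Fin (n + 1) → Fin 2 // AdmissibleSeq v} + aC n = fR n 1 := by
  rw [Nat.card_eq_fintype_card, Fintype.card_subtype]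
  have hfe : ((Finset.univ : Finset (Fin (n + 1) → Fin 2)).filter
        (fun v => AdmissibleSeq v)) =
      ((Finset.univ : Finset (Fin (n + 1) → Fin 2)).filter
        (fun v => (n + zc v) % 3 = 1)).filter (fun v => ¬ Alt v) := by
    rw [Finset.filter_filter]
    apply Finset.filter_congr
    intro v _
    unfold AdmissibleSeq Alt zc
    constructor
    · rintro ⟨h1, h2⟩
      refine ⟨h2, ?_⟩
      push_neg
      obtain ⟨j, hj⟩ := h1 hn
      exact ⟨j, hj⟩
    · rintro ⟨h2, h1⟩
      push_neg at h1
      exact ⟨fun _ => h1, h2⟩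
  have hpart := Finset.card_filter_add_card_filter_not
    (s := (Finset.univ : Finset (Fin (n + 1) → Fin 2)).filter
      (fun v => (n + zc v) % 3 = 1)) (p := Alt)
  have haC : aC n = (((Finset.univ : Finset (Fin (n + 1) → Fin 2)).filter
      (fun v => (n + zc v) % 3 = 1)).filter Alt).card := by
    rw [aC, Finset.filter_filter]
  rw [hfe, haC]
  unfold fR
  omega

end Stmt18Aux

theorem stmt18 :
    Nat.card {v : Fin (1 + 1) → Fin 2 // AdmissibleSeq v} = 1 ∧
    ∀ n, 2 ≤ n →
      Nat.card {v : Fin (n + 1) → Fin 2 // AdmissibleSeq v} =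
        2 ^ n - 1 - Nat.card {v : Fin (n - 1 + 1) → Fin 2 // AdmissibleSeq v} := by
  constructor
  · have h := Stmt18Aux.cardB 1 le_rfl
    have haC : Stmt18Aux.aC 1 = 0 := by rw [Stmt18Aux.aC_eq]; norm_num
    have hfR : Stmt18Aux.fR 1 1 = 1 := by decide
    omega
  · intro n hn
    obtain ⟨m, rfl⟩ : ∃ m, n = m + 2 := ⟨n - 2, by omega⟩
    have hsub : (m + 2 : ℕ) - 1 = m + 1 := rfl
    rw [hsub]
    have e1 : Nat.card {v : Fin (m + 2 + 1) → Fin 2 // AdmissibleSeq v} + Stmt18Aux.aC (m + 2) =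
        Stmt18Aux.fR (m + 2) 1 := Stmt18Aux.cardB (m + 2) (by omega)
    have e2 : Nat.card {v : Fin (m + 1 + 1) → Fin 2 // AdmissibleSeq v} + Stmt18Aux.aC (m + 1) =
        Stmt18Aux.fR (m + 1) 1 := Stmt18Aux.cardB (m + 1) (by omega)
    have e3 : Stmt18Aux.fR (m + 2) 1 = Stmt18Aux.fR (m + 1) 0 + Stmt18Aux.fR (m + 1) 2 := Stmt18Aux.fR_succ (m + 1)
    have e4 : Stmt18Aux.fR (m + 1) 0 + Stmt18Aux.fR (m + 1) 1 + Stmt18Aux.fR (m + 1) 2 = 2 ^ (m + 2) := Stmt18Aux.fR_total (m + 1)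
    have e5 : Stmt18Aux.aC (m + 2) + Stmt18Aux.aC (m + 1) = 1 := by
      rw [Stmt18Aux.aC_eq, Stmt18Aux.aC_eq]
      rcases Nat.mod_two_eq_zero_or_one m with h | h <;> split_ifs <;> omega
    omega
end
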